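/- Let P be a field and H a commutative P-algebra. Then LSC(H) = qVar(H) — i.e., for every commutative P-algebra B (in a universe containing that of P and H), B satisfies every finitary quasiidentity holding in H if and only if every finitely generated P-subalgebra of B admits an injective P-algebra homomorphism into some power (J → H) of H — if and only if H is logically noetherian. -/

import Mathlib

open MvPolynomial

universe u v

/-- The `H`-closure `T''_H` of a set `T` of polynomials. -/
def hClosure (P : Type u) [Field P] (H : Type v) [CommRing H] [Algebra P H]
    (n : ℕ) (T : Set (MvPolynomial (Fin n) P)) : Set (MvPolynomial (Fin n) P) :=
  {f | ∀ μ : Fin n → H, (∀ g ∈ T, aeval μ g = 0) → aeval μ f = 0}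

/-- `H` is logically noetherian: membership in any closure `T''_H` is witnessed
by a finite subset of `T`. -/
def LogicallyNoetherian (P : Type u) [Field P]
    (H : Type v) [CommRing H] [Algebra P H] : Prop :=
  ∀ (n : ℕ) (T : Set (MvPolynomial (Fin n) P)) (f : MvPolynomial (Fin n) P),
    f ∈ hClosure P H n T →
    ∃ T₀ : Finset (MvPolynomial (Fin n) P), ↑T₀ ⊆ T ∧ f ∈ hClosure P H n ↑T₀

section Aux

universe w w'

variable {P : Type u} [Field P] {H : Type v} [CommRing H] [Algebra P H]

/-- The `ULift` of an algebra is isomorphic to it, as an algebra. -/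
noncomputable def uliftAlgEquiv (A : Type u) [CommRing A] [Algebra P A] :
    ULift.{v} A ≃ₐ[P] A :=
  { ULift.ringEquiv with commutes' := fun _ => rfl }

/-- LSC(B) → Quasi(B); no noetherian hypothesis needed. -/
lemma lsc_to_quasi {B : Type w} [CommRing B] [Algebra P B]
    (hLSC : ∀ S : Subalgebra P B, S.FG →
        ∃ (J : Type w') (g : S →ₐ[P] (J → H)), Function.Injective g)
    (n : ℕ) (T : Finset (MvPolynomial (Fin n) P)) (f : MvPolynomial (Fin n) P)
    (hH : ∀ μ : Fin n → H, (∀ g ∈ T, aeval μ g = 0) → aeval μ f = 0)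
    (μ : Fin n → B) (hμ : ∀ g ∈ T, aeval μ g = 0) : aeval μ f = 0 := by
  classical
  set S := Algebra.adjoin P (Set.range μ) with hS
  have hFG : S.FG := ⟨(Set.finite_range μ).toFinset, by simp [hS]⟩
  obtain ⟨J, g, hg⟩ := hLSC S hFG
  set μ' : Fin n → S := fun i => ⟨μ i, Algebra.subset_adjoin (Set.mem_range_self i)⟩ with hμ'
  have hval : ∀ p : MvPolynomial (Fin n) P, (S.val (aeval μ' p) : B) = aeval μ p := by
    intro p
    exact comp_aeval_apply μ' S.val p
  have h0 : ∀ t ∈ T, aeval μ' t = 0 := by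
    intro t ht
    apply Subtype.ext
    show (S.val (aeval μ' t) : B) = 0
    rw [hval]; exact hμ t ht
  have hpt : ∀ j : J, aeval (fun i => g (μ' i) j) f = 0 := by
    intro j
    apply hH
    intro t ht
    have hcomp : ((Pi.evalAlgHom P (fun _ : J => H) j).comp g) (aeval μ' t)
        = aeval (fun i => g (μ' i) j) t := comp_aeval_apply μ' _ t
    rw [← hcomp, h0 t ht, map_zero]
  have hzf : g (aeval μ' f) = 0 := by
    funext j
    have hcomp : ((Pi.evalAlgHom P (fun _ : J => H) j).comp g) (aeval μ' f)
        = aeval (fun i => g (μ' i) j) f := comp_aeval_apply μ' _ f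
    exact hcomp.trans (hpt j)
  have : aeval μ' f = 0 := hg (by rw [hzf, map_zero])
  rw [← hval, this, map_zero]

/-- Quasi(B) → LSC(B), given that `H` is logically noetherian. -/
lemma quasi_to_lsc (hNoeth : LogicallyNoetherian P H)
    {B : Type (max u v)} [CommRing B] [Algebra P B]
    (hQ : ∀ (n : ℕ) (T : Finset (MvPolynomial (Fin n) P)) (f : MvPolynomial (Fin n) P),
        (∀ μ : Fin n → H, (∀ g ∈ T, aeval μ g = 0) → aeval μ f = 0) →
        ∀ μ : Fin n → B, (∀ g ∈ T, aeval μ g = 0) → aeval μ f = 0)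
    (S : Subalgebra P B) (hFG : S.FG) :
    ∃ (J : Type (max u v)) (g : S →ₐ[P] (J → H)), Function.Injective g := by
  classical
  obtain ⟨s, hs⟩ := hFG
  set n := s.card with hn
  set x : Fin n → B := fun i => (s.equivFin.symm i : B) with hxdef
  have hx : Set.range x = ↑s := by
    ext b
    constructor
    · rintro ⟨i, rfl⟩; exact (s.equivFin.symm i).2
    · intro hb; exact ⟨s.equivFin ⟨b, hb⟩, by simp [hxdef]⟩
  set φ : MvPolynomial (Fin n) P →ₐ[P] B := aeval x with hφ
  have hrange : φ.range = S := by
    rw [hφ, ← Algebra.adjoin_range_eq_range_aeval, hx, hs]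
  set K : Set (MvPolynomial (Fin n) P) := {p | aeval x p = 0} with hK
  set J : Type (max u v) := ULift.{u} {μ : Fin n → H // ∀ g ∈ K, aeval μ g = 0} with hJ
  set ψ : MvPolynomial (Fin n) P →ₐ[P] (J → H) :=
    Pi.algHom P _ (fun j => aeval j.down.1) with hψ
  have hker : ∀ p ∈ RingHom.ker φ, ψ p = 0 := by
    intro p hp
    funext j
    exact j.down.2 p (RingHom.mem_ker.mp hp)
  set ψq : (MvPolynomial (Fin n) P ⧸ RingHom.ker φ) →ₐ[P] (J → H) :=
    Ideal.Quotient.liftₐ _ ψ hker with hψq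
  have hψq_inj : Function.Injective ψq := by
    rw [injective_iff_map_eq_zero]
    intro q hq
    obtain ⟨p, rfl⟩ := Ideal.Quotient.mk_surjective q
    have hψp : ψ p = 0 := by
      rw [← hq, hψq, Ideal.Quotient.liftₐ_apply]
      rfl
    have hcl : p ∈ hClosure P H n K := by
      intro ν hν
      exact congrFun hψp (ULift.up ⟨ν, hν⟩)
    obtain ⟨K₀, hK₀, hp0⟩ := hNoeth n K p hcl
    have hx0 : aeval x p = 0 := by
      refine hQ n K₀ p (fun ν hν => hp0 ν hν) x ?_
      intro g hg
      exact hK₀ hg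
    exact Ideal.Quotient.eq_zero_iff_mem.mpr (RingHom.mem_ker.mpr hx0)
  exact ⟨J, ψq.comp ((Ideal.quotientKerEquivRange φ).symm.toAlgHom.comp
      (Subalgebra.equivOfEq S φ.range hrange.symm).toAlgHom),
    hψq_inj.comp ((Ideal.quotientKerEquivRange φ).symm.injective.comp
      (Subalgebra.equivOfEq S φ.range hrange.symm).injective)⟩

/-- The ideal of "finitely entailed" consequences of `T` over `H`. -/
def consIdeal (P : Type u) [Field P] (H : Type v) [CommRing H] [Algebra P H]
    (n : ℕ) (T : Set (MvPolynomial (Fin n) P)) : Ideal (MvPolynomial (Fin n) P) where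
  carrier := {p | ∃ T₀ : Finset (MvPolynomial (Fin n) P), ↑T₀ ⊆ T ∧ p ∈ hClosure P H n ↑T₀}
  zero_mem' := ⟨∅, by simp, fun μ _ => map_zero _⟩
  add_mem' := by
    classical
    rintro a b ⟨Ta, hTa, ha⟩ ⟨Tb, hTb, hb⟩
    refine ⟨Ta ∪ Tb, ?_, fun μ hμ => ?_⟩
    · intro g hg
      rcases Finset.mem_union.mp hg with h | h
      · exact hTa h
      · exact hTb h
    have h1 : aeval μ a = 0 :=
      ha μ (fun g hg => hμ g (Finset.mem_union_left _ hg))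
    have h2 : aeval μ b = 0 :=
      hb μ (fun g hg => hμ g (Finset.mem_union_right _ hg))
    rw [map_add, h1, h2, add_zero]
  smul_mem' := by
    rintro c p ⟨T₀, hT₀, hp⟩
    exact ⟨T₀, hT₀, fun μ hμ => by
      rw [smul_eq_mul, map_mul, hp μ hμ, mul_zero]⟩

set_option maxHeartbeats 1000000 in
/-- If LSC = qVar for all algebras `B`, then `H` is logically noetherian. -/
lemma noeth_of_equiv
    (hBig : ∀ (B : Type (max u v)) [CommRing B] [Algebra P B],
        ((∀ (n : ℕ) (T : Finset (MvPolynomial (Fin n) P))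
            (f : MvPolynomial (Fin n) P),
            (∀ μ : Fin n → H, (∀ g ∈ T, aeval μ g = 0) → aeval μ f = 0) →
            ∀ μ : Fin n → B, (∀ g ∈ T, aeval μ g = 0) → aeval μ f = 0)
          ↔
        (∀ S : Subalgebra P B, S.FG →
            ∃ (J : Type (max u v)) (g : S →ₐ[P] (J → H)),
              Function.Injective g)))
    (n : ℕ) (T : Set (MvPolynomial (Fin n) P)) (f : MvPolynomial (Fin n) P)
    (hf : f ∈ hClosure P H n T) :
    ∃ T₀ : Finset (MvPolynomial (Fin n) P), ↑T₀ ⊆ T ∧ f ∈ hClosure P H n ↑T₀ := by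
  classical
  set I : Ideal (MvPolynomial (Fin n) P) := consIdeal P H n T with hI
  set B : Type (max u v) := ULift.{v} (MvPolynomial (Fin n) P ⧸ I) with hB
  set E : B →ₐ[P] (MvPolynomial (Fin n) P ⧸ I) :=
    (uliftAlgEquiv (MvPolynomial (Fin n) P ⧸ I)).toAlgHom with hE
  set E' : (MvPolynomial (Fin n) P ⧸ I) →ₐ[P] B :=
    (uliftAlgEquiv (MvPolynomial (Fin n) P ⧸ I)).symm.toAlgHom with hE'
  have hEinj : Function.Injective E := (uliftAlgEquiv _).injective
  have hE'inj : Function.Injective E' := (uliftAlgEquiv _).symm.injective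
  -- Quasi(B) holds
  have hquasi : ∀ (m : ℕ) (U : Finset (MvPolynomial (Fin m) P))
      (h : MvPolynomial (Fin m) P),
      (∀ μ : Fin m → H, (∀ g ∈ U, aeval μ g = 0) → aeval μ h = 0) →
      ∀ μ : Fin m → B, (∀ g ∈ U, aeval μ g = 0) → aeval μ h = 0 := by
    intro m U h hH μ hμ
    have hsurj : ∀ i, ∃ q : MvPolynomial (Fin n) P,
        Ideal.Quotient.mk I q = E (μ i) := fun i => Ideal.Quotient.mk_surjective _
    choose p hp using hsurj
    have key : ∀ u : MvPolynomial (Fin m) P,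
        E (aeval μ u) = Ideal.Quotient.mk I (aeval p u) := by
      intro u
      have h1 : E (aeval μ u) = aeval (fun i => E (μ i)) u := comp_aeval_apply μ E u
      have h2 : (Ideal.Quotient.mkₐ P I) (aeval p u)
          = aeval (fun i => (Ideal.Quotient.mkₐ P I) (p i)) u :=
        comp_aeval_apply p (Ideal.Quotient.mkₐ P I) u
      rw [Ideal.Quotient.mkₐ_eq_mk] at h2
      have h3 : (fun i => E (μ i)) = fun i => Ideal.Quotient.mk I (p i) :=
        funext fun i => (hp i).symm
      rw [h1, h2, h3]
    have mem : ∀ u ∈ U, aeval p u ∈ I := by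
      intro u hu
      have h0 : Ideal.Quotient.mk I (aeval p u) = 0 := by
        rw [← key, hμ u hu, map_zero]
      exact Ideal.Quotient.eq_zero_iff_mem.mp h0
    choose Tu hTu hTu2 using fun (u : U) => mem u u.2
    have hmemI : aeval p h ∈ I := by
      refine ⟨U.attach.biUnion Tu, ?_, ?_⟩
      · intro q hq
        obtain ⟨u, _, hqu⟩ := Finset.mem_biUnion.mp (Finset.mem_coe.mp hq)
        exact hTu u hqu
      · intro ν hν
        have hν' : ∀ u ∈ U, aeval (fun i => aeval ν (p i)) u = 0 := by
          intro u hu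
          have hmem : aeval p u ∈ hClosure P H n ↑(Tu ⟨u, hu⟩) := hTu2 ⟨u, hu⟩
          have h0 : aeval ν (aeval p u) = 0 := by
            refine hmem ν (fun q hq => hν q ?_)
            exact Finset.mem_coe.mpr (Finset.mem_biUnion.mpr
              ⟨⟨u, hu⟩, Finset.mem_attach _ _, Finset.mem_coe.mp hq⟩)
          rwa [comp_aeval_apply p (aeval ν) u] at h0
        have h0 := hH (fun i => aeval ν (p i)) hν'
        rwa [comp_aeval_apply p (aeval ν) h]
    have h0 : E (aeval μ h) = 0 := by
      rw [key h, Ideal.Quotient.eq_zero_iff_mem]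
      exact hmemI
    exact hEinj (h0.trans (map_zero E).symm)
  have hLSC := (hBig B).mp hquasi
  set xB : Fin n → B := fun i => E' (Ideal.Quotient.mk I (X i)) with hxB
  set S : Subalgebra P B := Algebra.adjoin P (Set.range xB) with hSdef
  have hFG : S.FG := ⟨(Set.finite_range xB).toFinset, by simp [hSdef]⟩
  obtain ⟨J, g, hg⟩ := hLSC S hFG
  set xS : Fin n → S := fun i => ⟨xB i, Algebra.subset_adjoin (Set.mem_range_self i)⟩ with hxS
  have key2 : ∀ q : MvPolynomial (Fin n) P,
      (S.val (aeval xS q) : B) = E' (Ideal.Quotient.mk I q) := by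
    intro q
    have h1 : S.val (aeval xS q) = aeval (fun i => (S.val (xS i) : B)) q :=
      comp_aeval_apply xS S.val q
    have h2 : (E'.comp (Ideal.Quotient.mkₐ P I)) (aeval X q)
        = aeval (fun i => (E'.comp (Ideal.Quotient.mkₐ P I)) (X i)) q :=
      comp_aeval_apply X _ q
    rw [aeval_X_left_apply] at h2
    have h3 : (fun i => (S.val (xS i) : B))
        = (fun i => (E'.comp (Ideal.Quotient.mkₐ P I)) (X i)) := rfl
    rw [h1, h3, ← h2]
    rfl
  have hvanish : ∀ t ∈ T, aeval xS t = 0 := by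
    intro t ht
    apply Subtype.ext
    show (S.val (aeval xS t) : B) = 0
    rw [key2]
    have h0 : Ideal.Quotient.mk I t = 0 :=
      Ideal.Quotient.eq_zero_iff_mem.mpr ⟨{t}, by simpa using ht,
        fun μ hμ => hμ t (by simp)⟩
    rw [h0, map_zero]
  have hpt : ∀ j : J, ∀ t ∈ T, aeval (fun i => g (xS i) j) t = 0 := by
    intro j t ht
    have hcomp : ((Pi.evalAlgHom P (fun _ : J => H) j).comp g) (aeval xS t)
        = aeval (fun i => g (xS i) j) t := comp_aeval_apply xS _ t
    rw [← hcomp, hvanish t ht, map_zero]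
  have hzf : g (aeval xS f) = 0 := by
    funext j
    have hcomp : ((Pi.evalAlgHom P (fun _ : J => H) j).comp g) (aeval xS f)
        = aeval (fun i => g (xS i) j) f := comp_aeval_apply xS _ f
    exact hcomp.trans (hf _ (hpt j))
  have hS0 : aeval xS f = 0 := hg (by rw [hzf, map_zero])
  have hE0 : E' (Ideal.Quotient.mk I f) = 0 := by
    rw [← key2, hS0, map_zero]
  have hfI : f ∈ I := by
    rw [← Ideal.Quotient.eq_zero_iff_mem]
    exact hE'inj (hE0.trans (map_zero E').symm)
  obtain ⟨T₀, h1, h2⟩ := hfI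
  exact ⟨T₀, h1, h2⟩

end Aux

/-- `LSC(H) = qVar(H)` holds iff `H` is logically noetherian. -/
theorem LSC_eq_qVar_iff_logicallyNoetherian (P : Type u) [Field P]
    (H : Type v) [CommRing H] [Algebra P H] :
    (∀ (B : Type (max u v)) [CommRing B] [Algebra P B],
        ((∀ (n : ℕ) (T : Finset (MvPolynomial (Fin n) P))
            (f : MvPolynomial (Fin n) P),
            (∀ μ : Fin n → H, (∀ g ∈ T, aeval μ g = 0) → aeval μ f = 0) →
            ∀ μ : Fin n → B, (∀ g ∈ T, aeval μ g = 0) → aeval μ f = 0)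
          ↔
        (∀ S : Subalgebra P B, S.FG →
            ∃ (J : Type (max u v)) (g : S →ₐ[P] (J → H)),
              Function.Injective g)))
      ↔
    LogicallyNoetherian P H := by
  constructor
  · intro hBig
    exact fun n T f hf => noeth_of_equiv hBig n T f hf
  · intro hNoeth B _ _
    constructor
    · intro hQ
      exact quasi_to_lsc hNoeth hQ
    · intro hLSC n T f hH μ hμ
      exact lsc_to_quasi hLSC n T f hH μ hμ
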